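/- Let H be a triangle-free simple graph on m vertices that is not bipartite (equivalently, H contains an odd cycle). Then the number of edges of H is at most ⌊(m+1)²/4⌋ − m + 1. -/

import Mathlib

open Finset

namespace SimpleGraph.Walk
variable {V : Type*} {G : SimpleGraph V}

/-- Take the first `n` darts of a walk. -/
def takeW : {u v : V} → (p : G.Walk u v) → (n : ℕ) → G.Walk u (p.getVert n)
  | _, _, nil, _ => nil
  | _, _, cons _ _, 0 => nil
  | _, _, cons h q, (n+1) => cons h (takeW q n)

lemma length_takeW : ∀ {u v : V} (p : G.Walk u v) (n : ℕ), n ≤ p.length →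
    (p.takeW n).length = n
  | _, _, nil, 0, _ => rfl
  | _, _, nil, (_+1), h => by simp at h
  | _, _, cons _ _, 0, _ => rfl
  | _, _, cons h q, (n+1), hn => by
      simpa [takeW] using length_takeW q n (by simpa using hn)

/-- Drop the first `n` darts of a walk. -/
def dropW : {u v : V} → (p : G.Walk u v) → (n : ℕ) → G.Walk (p.getVert n) v
  | _, _, nil, _ => nil
  | _, _, p@(cons _ _), 0 => p
  | _, _, cons _ q, (n+1) => dropW q n

lemma length_dropW : ∀ {u v : V} (p : G.Walk u v) (n : ℕ),
    (p.dropW n).length = p.length - n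
  | _, _, nil, _ => by simp [dropW]
  | _, _, cons _ _, 0 => rfl
  | _, _, cons _ q, (n+1) => by
      simpa [dropW] using length_dropW q n

lemma getVert_dropW : ∀ {u v : V} (p : G.Walk u v) (n k : ℕ),
    (p.dropW n).getVert k = p.getVert (n + k)
  | _, _, nil, _, _ => rfl
  | _, _, cons _ _, 0, k => by simp [dropW]; rfl
  | _, _, cons h q, (n+1), k => by
      rw [show n + 1 + k = (n + k) + 1 by omega]
      simpa [dropW, getVert_cons_succ] using getVert_dropW q n k

lemma exists_segment {u v : V} (p : G.Walk u v) {i j : ℕ} (hij : i ≤ j) (hj : j ≤ p.length) :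
    ∃ q : G.Walk (p.getVert i) (p.getVert j), q.length = j - i := by
  refine ⟨((p.dropW i).takeW (j - i)).copy rfl ?_, ?_⟩
  · rw [getVert_dropW]; congr 1; omega
  · rw [length_copy]
    exact length_takeW _ _ (by rw [length_dropW]; omega)

end SimpleGraph.Walk

section Helpers

variable {V : Type*} [Fintype V] [DecidableEq V] (H : SimpleGraph V) [DecidableRel H.Adj]

omit [Fintype V] [DecidableEq V] in
lemma sum_adj_swap (A B : Finset V) :
    ∑ v ∈ A, #(B.filter (H.Adj v)) = ∑ w ∈ B, #(A.filter (H.Adj w)) := by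
  simp only [Finset.card_filter]
  rw [Finset.sum_comm]
  exact Finset.sum_congr rfl fun w _ => Finset.sum_congr rfl fun v _ => by
    simp only [H.adj_comm]

lemma sq_div_four_step (n : ℕ) (h : 2 ≤ n) : n ^ 2 / 4 = (n - 2) ^ 2 / 4 + (n - 1) := by
  obtain ⟨k, rfl⟩ : ∃ k, n = k + 2 := ⟨n - 2, by omega⟩
  have h1 : (k + 2) ^ 2 = k ^ 2 + 4 * (k + 1) := by ring
  rw [h1, Nat.add_mul_div_left _ _ (by norm_num : (0:ℕ) < 4)]
  simp only [Nat.add_sub_cancel]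
  omega

lemma mantel_local (hH : H.CliqueFree 3) :
    ∀ (n : ℕ) (A : Finset V), A.card = n →
      ∑ v ∈ A, #(A.filter (H.Adj v)) ≤ 2 * (n ^ 2 / 4) := by
  intro n
  induction n using Nat.strong_induction_on with
  | _ n ih =>
    intro A hA
    by_cases hex : ∃ u ∈ A, ∃ v ∈ A, H.Adj u v
    · obtain ⟨u, hu, v, hv, huv⟩ := hex
      have huv' : u ≠ v := H.ne_of_adj huv
      set A' := A \ {u, v} with hA'
      have hsub : ({u, v} : Finset V) ⊆ A := by
        intro x hx; rcases Finset.mem_insert.mp hx with rfl | hx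
        · exact hu
        · rw [Finset.mem_singleton.mp hx]; exact hv
      have hn2 : 2 ≤ n := by
        have := Finset.card_le_card hsub
        rw [Finset.card_pair huv'] at this; omega
      have hcardA' : A'.card = n - 2 := by
        rw [hA', Finset.card_sdiff_of_subset hsub, Finset.card_pair huv', hA]
      have hsplit : ∑ w ∈ A, #(A.filter (H.Adj w))
          = ∑ w ∈ A', #(A.filter (H.Adj w)) + (#(A.filter (H.Adj u)) + #(A.filter (H.Adj v))) := by
        rw [hA', ← Finset.sum_sdiff hsub, Finset.sum_pair huv']
      have hdisj : Disjoint (A.filter (H.Adj u)) (A.filter (H.Adj v)) := by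
        rw [Finset.disjoint_left]
        intro w hw1 hw2
        rw [Finset.mem_filter] at hw1 hw2
        exact hH {u, v, w} (SimpleGraph.is3Clique_triple_iff.mpr ⟨huv, hw1.2, hw2.2⟩)
      have hkey : #(A.filter (H.Adj u)) + #(A.filter (H.Adj v)) ≤ n := by
        rw [← Finset.card_union_of_disjoint hdisj, ← hA]
        exact Finset.card_le_card (Finset.union_subset (Finset.filter_subset _ _)
          (Finset.filter_subset _ _))
      have hAeq : A' ∪ {u, v} = A := Finset.sdiff_union_of_subset hsub
      have hinner : ∀ w ∈ A', #(A.filter (H.Adj w))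
          = #(A'.filter (H.Adj w)) + #(({u, v} : Finset V).filter (H.Adj w)) := by
        intro w _
        rw [← hAeq, Finset.filter_union, Finset.card_union_of_disjoint]
        exact Finset.disjoint_filter_filter (Finset.sdiff_disjoint)
      have hswap : ∑ w ∈ A', #(({u, v} : Finset V).filter (H.Adj w))
          = #(A'.filter (H.Adj u)) + #(A'.filter (H.Adj v)) := by
        rw [sum_adj_swap, Finset.sum_pair huv']
      have hu1 : #(A'.filter (H.Adj u)) + 1 ≤ #(A.filter (H.Adj u)) := by
        have hvmem : v ∈ A.filter (H.Adj u) := Finset.mem_filter.mpr ⟨hv, huv⟩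
        have hss : A'.filter (H.Adj u) ⊆ (A.filter (H.Adj u)).erase v := by
          intro w hw
          rw [Finset.mem_filter] at hw
          refine Finset.mem_erase.mpr ⟨?_, Finset.mem_filter.mpr ⟨(Finset.sdiff_subset hw.1), hw.2⟩⟩
          intro hwv; subst hwv
          exact (Finset.mem_sdiff.mp hw.1).2 (by simp)
        have := Finset.card_le_card hss
        rw [Finset.card_erase_of_mem hvmem] at this
        have hpos : 1 ≤ #(A.filter (H.Adj u)) := Finset.card_pos.mpr ⟨v, hvmem⟩
        omega
      have hv1 : #(A'.filter (H.Adj v)) + 1 ≤ #(A.filter (H.Adj v)) := by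
        have humem : u ∈ A.filter (H.Adj v) := Finset.mem_filter.mpr ⟨hu, huv.symm⟩
        have hss : A'.filter (H.Adj v) ⊆ (A.filter (H.Adj v)).erase u := by
          intro w hw
          rw [Finset.mem_filter] at hw
          refine Finset.mem_erase.mpr ⟨?_, Finset.mem_filter.mpr ⟨(Finset.sdiff_subset hw.1), hw.2⟩⟩
          intro hwu; subst hwu
          exact (Finset.mem_sdiff.mp hw.1).2 (by simp)
        have := Finset.card_le_card hss
        rw [Finset.card_erase_of_mem humem] at this
        have hpos : 1 ≤ #(A.filter (H.Adj v)) := Finset.card_pos.mpr ⟨u, humem⟩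
        omega
      have hih : ∑ w ∈ A', #(A'.filter (H.Adj w)) ≤ 2 * ((n - 2) ^ 2 / 4) :=
        ih (n - 2) (by omega) A' hcardA'
      have harith := sq_div_four_step n hn2
      calc ∑ w ∈ A, #(A.filter (H.Adj w))
          = ∑ w ∈ A', #(A.filter (H.Adj w)) + (#(A.filter (H.Adj u)) + #(A.filter (H.Adj v))) :=
            hsplit
        _ = (∑ w ∈ A', #(A'.filter (H.Adj w)) + (#(A'.filter (H.Adj u)) + #(A'.filter (H.Adj v))))
              + (#(A.filter (H.Adj u)) + #(A.filter (H.Adj v))) := by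
            rw [Finset.sum_congr rfl hinner, Finset.sum_add_distrib, hswap]
        _ ≤ 2 * (n ^ 2 / 4) := by omega
    · push_neg at hex
      have hz : ∀ w ∈ A, #(A.filter (H.Adj w)) = 0 := by
        intro w hw
        rw [Finset.card_eq_zero, Finset.filter_eq_empty_iff]
        exact fun x hx => hex w hw x hx
      rw [Finset.sum_congr rfl hz]
      simp

omit [Fintype V] [DecidableEq V] in
lemma exists_odd_closed_walk (hnb : ¬ H.Colorable 2) :
    ∃ (u : V) (p : H.Walk u u), Odd p.length := by
  by_contra hno
  push_neg at hno
  apply hnb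
  classical
  have hreach : ∀ v : V, H.Reachable (Quot.out (H.connectedComponentMk v)) v := by
    intro v
    apply SimpleGraph.ConnectedComponent.exact
    exact Quot.out_eq _
  have C : H.Coloring Bool := by
    refine SimpleGraph.Coloring.mk (fun v => decide ((hreach v).some.length % 2 = 1)) ?_
    intro u w hadj heq
    have hroot : Quot.out (H.connectedComponentMk u) = Quot.out (H.connectedComponentMk w) := by
      rw [SimpleGraph.ConnectedComponent.connectedComponentMk_eq_of_adj hadj]
    set p := (hreach u).some with hp
    set q := (hreach w).some with hq
    have hW := hno _ (p.append ((SimpleGraph.Walk.cons hadj q.reverse).copy rfl hroot.symm))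
    rw [SimpleGraph.Walk.length_append, SimpleGraph.Walk.length_copy,
      SimpleGraph.Walk.length_cons, SimpleGraph.Walk.length_reverse, Nat.odd_iff] at hW
    have hparity : (decide (p.length % 2 = 1) = decide (q.length % 2 = 1)) := heq
    rw [decide_eq_decide] at hparity
    omega
  have := C.colorable
  rwa [Fintype.card_bool] at this

lemma arith_final (g t : ℕ) (hodd : g % 2 = 1) (hg : 5 ≤ g) :
    g + 2 * t + t ^ 2 / 4 ≤ (g + t + 1) ^ 2 / 4 - (g + t) + 1 := by
  obtain ⟨k, rfl⟩ : ∃ k, g = 2 * k + 5 := ⟨(g - 5) / 2, by omega⟩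
  rcases Nat.even_or_odd t with ⟨l, rfl⟩ | ⟨l, rfl⟩
  · have h1 : (l + l) ^ 2 / 4 = l ^ 2 := by
      have h : (l + l) ^ 2 = l ^ 2 * 4 := by ring
      rw [h, Nat.mul_div_cancel _ (by norm_num)]
    have h2 : (2 * k + 5 + (l + l) + 1) ^ 2 / 4 = (k + l + 3) ^ 2 := by
      have h : (2 * k + 5 + (l + l) + 1) ^ 2 = (k + l + 3) ^ 2 * 4 := by ring
      rw [h, Nat.mul_div_cancel _ (by norm_num)]
    rw [h1, h2]
    have key : 2 * k + 5 + 2 * (l + l) + l ^ 2 + (2 * k + 5 + (l + l)) ≤ (k + l + 3) ^ 2 + 1 := by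
      nlinarith
    have hge : 2 * k + 5 + (l + l) ≤ (k + l + 3) ^ 2 := by nlinarith
    omega
  · have h1 : (2 * l + 1) ^ 2 / 4 = l ^ 2 + l := by
      have h : (2 * l + 1) ^ 2 = 1 + 4 * (l ^ 2 + l) := by ring
      rw [h, Nat.add_mul_div_left _ _ (by norm_num : (0:ℕ) < 4)]
      norm_num
    have h2 : (2 * k + 5 + (2 * l + 1) + 1) ^ 2 / 4 = (k + l + 3) * (k + l + 4) := by
      have h : (2 * k + 5 + (2 * l + 1) + 1) ^ 2 = 1 + 4 * ((k + l + 3) * (k + l + 4)) := by ring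
      rw [h, Nat.add_mul_div_left _ _ (by norm_num : (0:ℕ) < 4)]
      norm_num
    rw [h1, h2]
    have key : 2 * k + 5 + 2 * (2 * l + 1) + (l ^ 2 + l) + (2 * k + 5 + (2 * l + 1))
        ≤ (k + l + 3) * (k + l + 4) + 1 := by nlinarith
    have hge : 2 * k + 5 + (2 * l + 1) ≤ (k + l + 3) * (k + l + 4) := by nlinarith
    omega

end Helpers

/-- A triangle-free non-bipartite (i.e. not 2-colorable) graph on `m` vertices has at most
`⌊(m+1)²/4⌋ − m + 1` edges. -/
theorem edge_bound_triangle_free_non_bipartite {V : Type*} [Fintype V] [DecidableEq V]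
    (H : SimpleGraph V) [DecidableRel H.Adj] (hH : H.CliqueFree 3)
    (m : ℕ) (hm : Fintype.card V = m) (hnb : ¬ H.Colorable 2) :
    H.edgeFinset.card ≤ (m + 1) ^ 2 / 4 - m + 1 := by
  classical
  obtain ⟨u0, p0, hp0⟩ := exists_odd_closed_walk H hnb
  set OW : Set ℕ := {n | Odd n ∧ ∃ u : V, ∃ p : H.Walk u u, p.length = n} with hOW
  have hne : OW.Nonempty := ⟨p0.length, hp0, u0, p0, rfl⟩
  set g := sInf OW with hgdef
  have hgmem : g ∈ OW := Nat.sInf_mem hne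
  obtain ⟨hgodd, u, p, hplen⟩ := hgmem
  have hmin : ∀ n, Odd n → (∃ u : V, ∃ q : H.Walk u u, q.length = n) → g ≤ n :=
    fun n h1 h2 => Nat.sInf_le ⟨h1, h2⟩
  rw [Nat.odd_iff] at hgodd
  have hgv0 : p.getVert 0 = u := p.getVert_zero
  have hgvlen : p.getVert g = u := by rw [← hplen]; exact p.getVert_length
  -- g ≠ 1
  have hg1 : g ≠ 1 := by
    intro h
    have hadj := p.adj_getVert_succ (i := 0) (by rw [hplen]; omega)
    rw [h] at hgvlen
    rw [hgv0, hgvlen] at hadj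
    exact H.irrefl hadj
  -- g ≠ 3
  have hg3 : g ≠ 3 := by
    intro h
    have a01 := p.adj_getVert_succ (i := 0) (by rw [hplen]; omega)
    have a12 := p.adj_getVert_succ (i := 1) (by rw [hplen, h]; omega)
    have a23 := p.adj_getVert_succ (i := 2) (by rw [hplen, h]; omega)
    rw [h] at hgvlen
    rw [hgvlen] at a23
    rw [hgv0] at a01
    exact hH {u, p.getVert 1, p.getVert 2}
      (SimpleGraph.is3Clique_triple_iff.mpr ⟨a01, a23.symm, a12⟩)
  have hg5 : 5 ≤ g := by omega
  -- segments
  have hseg : ∀ i j : ℕ, i ≤ j → j ≤ g →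
      ∃ q : H.Walk (p.getVert i) (p.getVert j), q.length = j - i := by
    intro i j hij hj
    exact p.exists_segment hij (by rw [hplen]; omega)
  have hcomp : ∀ i j : ℕ, i ≤ j → j ≤ g →
      ∃ q : H.Walk (p.getVert j) (p.getVert i), q.length = (g - j) + i := by
    intro i j hij hj
    refine ⟨(p.dropW j).append (p.takeW i), ?_⟩
    rw [SimpleGraph.Walk.length_append, SimpleGraph.Walk.length_dropW,
      SimpleGraph.Walk.length_takeW _ _ (by rw [hplen]; omega), hplen]
  -- no repeated vertices (except the endpoints)
  have hnodup : ∀ i j : ℕ, i < j → j ≤ g → ¬(i = 0 ∧ j = g) →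
      p.getVert i ≠ p.getVert j := by
    intro i j hij hj hne heq
    obtain ⟨q1, hq1⟩ := hseg i j hij.le hj
    obtain ⟨q2, hq2⟩ := hcomp i j hij.le hj
    rcases Nat.even_or_odd (j - i) with he | ho
    · have hodd2 : Odd (g - j + i) := by
        rw [Nat.odd_iff]; rw [Nat.even_iff] at he; omega
      have := hmin _ hodd2 ⟨p.getVert i, q2.copy heq.symm rfl, by
        rw [SimpleGraph.Walk.length_copy]; exact hq2⟩
      omega
    · have := hmin (j - i) ho ⟨p.getVert i, q1.copy rfl heq.symm, by
        rw [SimpleGraph.Walk.length_copy]; exact hq1⟩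
      omega
  -- the support set
  set S : Finset V := (Finset.range g).image p.getVert with hSdef
  have hinj : Set.InjOn p.getVert ↑(Finset.range g) := by
    intro i hi j hj hij
    simp only [Finset.coe_range, Set.mem_Iio] at hi hj
    by_contra hne
    rcases Nat.lt_or_ge i j with h | h
    · exact hnodup i j h (by omega) (by omega) hij
    · exact hnodup j i (by omega) (by omega) (by omega) hij.symm
  have hScard : S.card = g := by
    rw [hSdef, Finset.card_image_of_injOn hinj, Finset.card_range]
  have hgm : g ≤ m := by
    rw [← hScard, ← hm]; exact Finset.card_le_univ S
  -- pair fact from minimality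
  have hpair : ∀ (v : V) (i j : ℕ), i < j → j ≤ g →
      H.Adj v (p.getVert i) → H.Adj v (p.getVert j) →
      (Odd (j - i) → g ≤ (j - i) + 2) ∧ (Odd (g - j + i) → g ≤ (g - j + i) + 2) := by
    intro v i j hij hj hvi hvj
    obtain ⟨q1, hq1⟩ := hseg i j hij.le hj
    obtain ⟨q2, hq2⟩ := hcomp i j hij.le hj
    constructor
    · intro hodd
      refine hmin _ (by rw [Nat.odd_iff] at hodd ⊢; omega)
        ⟨v, SimpleGraph.Walk.cons hvi (q1.append (SimpleGraph.Walk.cons hvj.symm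
          SimpleGraph.Walk.nil)), ?_⟩
      rw [SimpleGraph.Walk.length_cons, SimpleGraph.Walk.length_append,
        SimpleGraph.Walk.length_cons, SimpleGraph.Walk.length_nil, hq1]
    · intro hodd
      refine hmin _ (by rw [Nat.odd_iff] at hodd ⊢; omega)
        ⟨v, SimpleGraph.Walk.cons hvj (q2.append (SimpleGraph.Walk.cons hvi.symm
          SimpleGraph.Walk.nil)), ?_⟩
      rw [SimpleGraph.Walk.length_cons, SimpleGraph.Walk.length_append,
        SimpleGraph.Walk.length_cons, SimpleGraph.Walk.length_nil, hq2]
  -- every vertex has at most two neighbours in S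
  have hclaim : ∀ v : V, #(S.filter (H.Adj v)) ≤ 2 := by
    intro v
    by_contra hc
    push_neg at hc
    obtain ⟨x, hx, y, hy, z, hz, hxy, hxz, hyz⟩ := Finset.two_lt_card.mp hc
    rw [Finset.mem_filter] at hx hy hz
    obtain ⟨ix, hix, hgx⟩ := Finset.mem_image.mp hx.1
    obtain ⟨iy, hiy, hgy⟩ := Finset.mem_image.mp hy.1
    obtain ⟨iz, hiz, hgz⟩ := Finset.mem_image.mp hz.1
    rw [Finset.mem_range] at hix hiy hiz
    subst hgx hgy hgz
    have hxy' : ix ≠ iy := fun h => hxy (by rw [h])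
    have hxz' : ix ≠ iz := fun h => hxz (by rw [h])
    have hyz' : iy ≠ iz := fun h => hyz (by rw [h])
    have final : ∀ a b c : ℕ, a < b → b < c → c < g →
        H.Adj v (p.getVert a) → H.Adj v (p.getVert b) → H.Adj v (p.getVert c) → False := by
      intro a b c hab hbc hcg hva hvb hvc
      have F1 := hpair v a b hab (by omega) hva hvb
      have F2 := hpair v b c hbc (by omega) hvb hvc
      have F3 := hpair v a c (by omega) (by omega) hva hvc
      have D1 : (b - a) % 2 = 0 ∨ g ≤ (b - a) + 2 := by
        rcases Nat.even_or_odd (b - a) with h | h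
        · exact Or.inl (Nat.even_iff.mp h)
        · exact Or.inr (F1.1 h)
      have D1' : (g - b + a) % 2 = 0 ∨ g ≤ (g - b + a) + 2 := by
        rcases Nat.even_or_odd (g - b + a) with h | h
        · exact Or.inl (Nat.even_iff.mp h)
        · exact Or.inr (F1.2 h)
      have D2 : (c - b) % 2 = 0 ∨ g ≤ (c - b) + 2 := by
        rcases Nat.even_or_odd (c - b) with h | h
        · exact Or.inl (Nat.even_iff.mp h)
        · exact Or.inr (F2.1 h)
      have D2' : (g - c + b) % 2 = 0 ∨ g ≤ (g - c + b) + 2 := by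
        rcases Nat.even_or_odd (g - c + b) with h | h
        · exact Or.inl (Nat.even_iff.mp h)
        · exact Or.inr (F2.2 h)
      have D3 : (c - a) % 2 = 0 ∨ g ≤ (c - a) + 2 := by
        rcases Nat.even_or_odd (c - a) with h | h
        · exact Or.inl (Nat.even_iff.mp h)
        · exact Or.inr (F3.1 h)
      have D3' : (g - c + a) % 2 = 0 ∨ g ≤ (g - c + a) + 2 := by
        rcases Nat.even_or_odd (g - c + a) with h | h
        · exact Or.inl (Nat.even_iff.mp h)
        · exact Or.inr (F3.2 h)
      omega
    have hvx := hx.2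
    have hvy := hy.2
    have hvz := hz.2
    rcases Nat.lt_or_ge ix iy with h1 | h1
    · rcases Nat.lt_or_ge iy iz with h2 | h2
      · exact final ix iy iz h1 h2 hiz hvx hvy hvz
      · rcases Nat.lt_or_ge ix iz with h3 | h3
        · exact final ix iz iy h3 (by omega) hiy hvx hvz hvy
        · exact final iz ix iy (by omega) h1 hiy hvz hvx hvy
    · rcases Nat.lt_or_ge ix iz with h2 | h2
      · exact final iy ix iz (by omega) h2 hiz hvy hvx hvz
      · rcases Nat.lt_or_ge iy iz with h3 | h3
        · exact final iy iz ix h3 (by omega) hix hvy hvz hvx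
        · exact final iz iy ix (by omega) (by omega) hix hvz hvy hvx
  -- counting
  have hCcard : (Sᶜ : Finset V).card = m - g := by
    rw [Finset.card_compl, hScard, hm]
  have hdeg : ∀ v : V, H.degree v = #(S.filter (H.Adj v)) + #((Sᶜ : Finset V).filter (H.Adj v)) := by
    intro v
    rw [← SimpleGraph.card_neighborFinset_eq_degree, SimpleGraph.neighborFinset_eq_filter]
    have hun : S.filter (H.Adj v) ∪ (Sᶜ : Finset V).filter (H.Adj v)
        = Finset.univ.filter (H.Adj v) := by
      rw [← Finset.filter_union, Finset.union_compl]
    rw [← hun, Finset.card_union_of_disjoint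
      (Finset.disjoint_filter_filter disjoint_compl_right)]
  have hhs := H.sum_degrees_eq_twice_card_edges
  have hsum : ∑ v, H.degree v
      = (∑ v ∈ S, #(S.filter (H.Adj v)) + ∑ v ∈ Sᶜ, #(S.filter (H.Adj v)))
        + (∑ v ∈ S, #((Sᶜ : Finset V).filter (H.Adj v))
            + ∑ v ∈ Sᶜ, #((Sᶜ : Finset V).filter (H.Adj v))) := by
    rw [Finset.sum_congr rfl (fun v _ => hdeg v), Finset.sum_add_distrib,
      ← Finset.sum_add_sum_compl S (fun v => #(S.filter (H.Adj v))),
      ← Finset.sum_add_sum_compl S (fun v => #((Sᶜ : Finset V).filter (H.Adj v)))]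
  have b1 : ∑ v ∈ S, #(S.filter (H.Adj v)) ≤ 2 * g := by
    calc ∑ v ∈ S, #(S.filter (H.Adj v)) ≤ S.card • 2 :=
          Finset.sum_le_card_nsmul _ _ _ (fun v _ => hclaim v)
      _ = 2 * g := by rw [hScard, smul_eq_mul]; ring
  have b2 : ∑ v ∈ Sᶜ, #(S.filter (H.Adj v)) ≤ 2 * (m - g) := by
    calc ∑ v ∈ Sᶜ, #(S.filter (H.Adj v)) ≤ (Sᶜ : Finset V).card • 2 :=
          Finset.sum_le_card_nsmul _ _ _ (fun v _ => hclaim v)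
      _ = 2 * (m - g) := by rw [hCcard, smul_eq_mul]; ring
  have b3 : ∑ v ∈ S, #((Sᶜ : Finset V).filter (H.Adj v))
      = ∑ v ∈ Sᶜ, #(S.filter (H.Adj v)) := sum_adj_swap H S Sᶜ
  have b4 : ∑ v ∈ Sᶜ, #((Sᶜ : Finset V).filter (H.Adj v)) ≤ 2 * ((m - g) ^ 2 / 4) :=
    mantel_local H hH (m - g) Sᶜ hCcard
  have hedge : 2 * H.edgeFinset.card ≤ 2 * g + 2 * (m - g) + 2 * (m - g) + 2 * ((m - g) ^ 2 / 4) := by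
    rw [← hhs, hsum, b3]
    omega
  have hfin : H.edgeFinset.card ≤ g + 2 * (m - g) + (m - g) ^ 2 / 4 := by omega
  have harith := arith_final g (m - g) hgodd hg5
  have hmg : g + (m - g) = m := by omega
  rw [hmg] at harith
  omega
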